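/- Let M be a partial order and let B₁, B₂ ∈ CWT(M). Then B₁ ≤*_M B₂ if and only if every almost front of B₁ is an almost front of B₂. -/

import Mathlib

open Set Cardinal

universe u

variable {α : Type u}

section OrderDefs

variable [PartialOrder α]

/-- `η` and `ν` are compatible in `M`: they have a common `≤`-upper bound in `M`. -/
def Compat (M : Set α) (η ν : α) : Prop :=
  ∃ ρ ∈ M, η ≤ ρ ∧ ν ≤ ρ

/-- The set of immediate successors of `ν` inside `B`. -/
def succIn (B : Set α) (ν : α) : Set α :=
  {ρ ∈ B | ν < ρ ∧ ¬∃ σ ∈ B, ν < σ ∧ σ < ρ}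

/-- The set of maximal elements of `B`. -/
def maxIn (B : Set α) : Set α :=
  {η ∈ B | ∀ ν ∈ B, ¬η < ν}

/-- `r` is the root (least element) of `B`. -/
def IsRoot (B : Set α) (r : α) : Prop :=
  r ∈ B ∧ ∀ x ∈ B, r ≤ x

/-- `B` is a countable well-founded subtree of `M`. -/
def CWT (M B : Set α) : Prop :=
  B ⊆ M ∧ B.Countable ∧ (∃ r, IsRoot B r) ∧
  (∀ ν ∈ B, ∀ η ∈ B, ∀ ρ ∈ B, η ≤ ν → ρ ≤ ν → η ≤ ρ ∨ ρ ≤ η) ∧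
  (∀ C, C ⊆ B → IsChain (· ≤ ·) C → C.Finite) ∧
  (∀ ν ∈ B, succIn B ν = ∅ ∨ (succIn B ν).Infinite) ∧
  (∀ η ∈ B, ∀ ν ∈ B, ¬η ≤ ν → ¬ν ≤ η → ¬Compat M η ν) ∧
  (∀ ν ∈ B \ maxIn B, ∀ F : Finset α, (F : Set α) ⊆ M \ {ρ | ρ ≤ ν} →
    {ϱ ∈ succIn B ν | ∀ ρ ∈ F, ¬Compat M ρ ϱ}.Infinite)

/-- `Y` is a front of `B`: a maximal set of pairwise incomparable members of `B`. -/
def IsFront (B Y : Set α) : Prop :=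
  Y ⊆ B ∧ (∀ η ∈ Y, ∀ ν ∈ Y, η ≠ ν → ¬η ≤ ν) ∧
  (∀ ν ∈ B, ∃ η ∈ Y, η ≤ ν ∨ ν ≤ η)

/-- `B'` is an exhaustive subtree of `B`. -/
def sb (M B B' : Set α) : Prop :=
  CWT M B' ∧ B' ⊆ B ∧ (∃ r, IsRoot B r ∧ IsRoot B' r) ∧
  ∀ ν ∈ B', succIn B' ν ⊆ succIn B ν ∧ (succIn B ν \ succIn B' ν).Finite

/-- `B'` is a positive subtree of `B`. -/
def psb (M B B' : Set α) : Prop :=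
  CWT M B' ∧ B' ⊆ B ∧ (∃ r, IsRoot B r ∧ IsRoot B' r) ∧
  ∀ ν ∈ B' \ maxIn B, (succIn B' ν).Infinite ∧ succIn B' ν ⊆ succIn B ν

/-- `Y` is an almost front of `B`: an antichain of `M` whose intersection with some
exhaustive subtree `B'` of `B` is a front of `B'`. -/
def IsAlmostFront (M B Y : Set α) : Prop :=
  Y ⊆ M ∧ (∀ η ∈ Y, ∀ ν ∈ Y, η ≠ ν → ¬η ≤ ν) ∧
  ∃ B', sb M B B' ∧ IsFront B' (Y ∩ B')

/-- The relation `B₁ ≤*_M B₂`. -/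
def leStar (M B₁ B₂ : Set α) : Prop :=
  CWT M B₁ ∧ CWT M B₂ ∧ (∃ r, IsRoot B₁ r ∧ IsRoot B₂ r) ∧
  ∃ B₂', sb M B₂ B₂' ∧ psb M B₁ (B₂' ∩ B₁) ∧
    ∀ Y, IsAlmostFront M (B₂' ∩ B₁) Y → IsAlmostFront M B₂ Y

end OrderDefs

section AuxLemmas

variable [PartialOrder α] {M : Set α}

private theorem root_uniq {B : Set α} {r r' : α} (h : IsRoot B r) (h' : IsRoot B r') : r = r' :=
  le_antisymm (h.2 r' h'.1) (h'.2 r h.1)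

private theorem compat_mono {a b ρ : α} (hab : a ≤ b) : Compat M ρ b → Compat M ρ a :=
  fun ⟨ξ, hξ, hρ, hb⟩ => ⟨ξ, hξ, hρ, hab.trans hb⟩

private theorem exists_least_of {S : Set α} (hfin : S.Finite) (hne : S.Nonempty)
    (hcomp : ∀ a ∈ S, ∀ b ∈ S, a ≤ b ∨ b ≤ a) : ∃ m ∈ S, ∀ a ∈ S, m ≤ a := by
  obtain ⟨m, hm, hmin⟩ := Set.Finite.exists_minimalFor id S hfin hne
  refine ⟨m, hm, fun a ha => ?_⟩
  rcases hcomp m hm a ha with h | h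
  · exact h
  · exact hmin ha h

private theorem exists_greatest_of {S : Set α} (hfin : S.Finite) (hne : S.Nonempty)
    (hcomp : ∀ a ∈ S, ∀ b ∈ S, a ≤ b ∨ b ≤ a) : ∃ m ∈ S, ∀ a ∈ S, a ≤ m := by
  obtain ⟨m, hm, hmax⟩ := Set.Finite.exists_maximalFor id S hfin hne
  refine ⟨m, hm, fun a ha => ?_⟩
  rcases hcomp m hm a ha with h | h
  · exact hmax ha h
  · exact h

private theorem below_finite {B : Set α} (hB : CWT M B) {x : α} (hx : x ∈ B) :
    {ζ ∈ B | ζ ≤ x}.Finite :=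
  hB.2.2.2.2.1 _ (fun ζ hζ => hζ.1)
    (fun a ha b hb _ => hB.2.2.2.1 x hx a ha.1 b hb.1 ha.2 hb.2)

private theorem exists_succ_le {B : Set α} (hB : CWT M B) {x z : α} (hx : x ∈ B) (hz : z ∈ B)
    (hlt : x < z) : ∃ w ∈ succIn B x, w ≤ z := by
  have hfin : {w ∈ B | x < w ∧ w ≤ z}.Finite :=
    (below_finite hB hz).subset (fun w hw => ⟨hw.1, hw.2.2⟩)
  obtain ⟨m, hm, hmin⟩ := exists_least_of hfin ⟨z, hz, hlt, le_rfl⟩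
    (fun a ha b hb => hB.2.2.2.1 z hz a ha.1 b hb.1 ha.2.2 hb.2.2)
  refine ⟨m, ⟨hm.1, hm.2.1, ?_⟩, hm.2.2⟩
  rintro ⟨σ, hσB, hxσ, hσm⟩
  exact hσm.not_ge (hmin σ ⟨hσB, hxσ, hσm.le.trans hm.2.2⟩)

private theorem exists_max_ge {B : Set α} (hB : CWT M B) {x : α} (hx : x ∈ B) :
    ∃ m ∈ maxIn B, x ≤ m := by
  have hzorn : ∀ c ⊆ B, IsChain (· ≤ ·) c → ∀ y ∈ c, ∃ ub ∈ B, ∀ z ∈ c, z ≤ ub := by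
    intro c hc hchain y hy
    have hfin : c.Finite := hB.2.2.2.2.1 c hc hchain
    obtain ⟨m, hm, hub⟩ := exists_greatest_of hfin ⟨y, hy⟩
      (fun a ha b hb => (eq_or_ne a b).elim (fun h => Or.inl h.le) (fun h => hchain ha hb h))
    exact ⟨m, hc hm, hub⟩
  obtain ⟨m, hxm, hm⟩ := zorn_le_nonempty₀ B hzorn x hx
  refine ⟨m, ⟨hm.1, fun ν hν hlt => ?_⟩, hxm⟩
  exact hlt.not_ge (hm.2 hν hlt.le)

private theorem succ_not_le {B : Set α} {x a b : α} (ha : a ∈ succIn B x) (hb : b ∈ succIn B x)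
    (hne : a ≠ b) : ¬a ≤ b :=
  fun hle => hb.2.2 ⟨a, ha.1, ha.2.1, lt_of_le_of_ne hle hne⟩

private theorem succ_not_compat {B : Set α} (hB : CWT M B) {x a b : α} (ha : a ∈ succIn B x)
    (hb : b ∈ succIn B x) (hne : a ≠ b) : ¬Compat M a b :=
  hB.2.2.2.2.2.2.1 a ha.1 b hb.1 (succ_not_le ha hb hne) (succ_not_le hb ha hne.symm)

private theorem not_maxIn_iff {B : Set α} {x : α} (hx : x ∈ B) :
    x ∉ maxIn B ↔ ∃ μ ∈ B, x < μ := by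
  constructor
  · intro h
    by_contra hc
    push_neg at hc
    exact h ⟨hx, fun ν hν => hc ν hν⟩
  · rintro ⟨μ, hμ, hlt⟩ hmax
    exact hmax.2 μ hμ hlt

private theorem sb_refl {B : Set α} (hB : CWT M B) : sb M B B :=
  ⟨hB, subset_rfl, hB.2.2.1.imp (fun _ hr => ⟨hr, hr⟩),
    fun ν _ => ⟨subset_rfl, by rw [Set.diff_self]; exact Set.finite_empty⟩⟩

private theorem downward_closed {B B' : Set α} (hB : CWT M B) (hB' : CWT M B')
    (hsub : B' ⊆ B) (hsucc : ∀ ν ∈ B', succIn B' ν ⊆ succIn B ν)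
    (hroot : ∃ r, IsRoot B r ∧ IsRoot B' r) {x ζ : α}
    (hx : x ∈ B') (hζ : ζ ∈ B) (hle : ζ ≤ x) : ζ ∈ B' := by
  by_contra hnot
  obtain ⟨r, hrB, hrB'⟩ := hroot
  have hrζ : r ≤ ζ := hrB.2 ζ hζ
  have hAfin : {w ∈ B' | w ≤ x ∧ w < ζ}.Finite :=
    (below_finite hB' hx).subset (fun w hw => ⟨hw.1, hw.2.1⟩)
  have hArne : r ∈ {w ∈ B' | w ≤ x ∧ w < ζ} :=
    ⟨hrB'.1, hrB'.2 x hx, lt_of_le_of_ne hrζ (fun h => hnot (h ▸ hrB'.1))⟩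
  obtain ⟨a, ha, hamax⟩ := exists_greatest_of hAfin ⟨r, hArne⟩ (fun u hu v hv =>
    hB.2.2.2.1 x (hsub hx) u (hsub hu.1) v (hsub hv.1) hu.2.1 hv.2.1)
  have hax : a < x := lt_of_lt_of_le ha.2.2 hle
  obtain ⟨b, hb, hbx⟩ := exists_succ_le hB' ha.1 hx hax
  rcases hB.2.2.2.1 x (hsub hx) b (hsub hb.1) ζ hζ hbx hle with hbζ | hζb
  · rcases eq_or_lt_of_le hbζ with heq | hblt
    · exact hnot (heq ▸ hb.1)
    · exact (hb.2.1).not_ge (hamax b ⟨hb.1, hbx, hblt⟩)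
  · rcases eq_or_lt_of_le hζb with heq | hζlt
    · exact hnot (heq ▸ hb.1)
    · exact (hsucc a ha.1 hb).2.2 ⟨ζ, hζ, ha.2.2, hζlt⟩

private theorem infinite_of_diff_finite {A S : Set α} (hA : A.Infinite)
    (h : (A \ S).Finite) : S.Infinite := by
  refine (hA.diff h).mono ?_
  rintro a ⟨ha, hna⟩
  by_contra hn
  exact hna ⟨ha, hn⟩

end AuxLemmas


section MainLemmas

variable [PartialOrder α] {M : Set α}

/-- Forward transfer: an almost front of `B₁` is an almost front of any positive subtree. -/
private theorem almostFront_of_psb {B₁ Bs Y : Set α} (h₁ : CWT M B₁) (hpsb : psb M B₁ Bs)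
    (hY : IsAlmostFront M B₁ Y) : IsAlmostFront M Bs Y := by
  obtain ⟨hYM, hYa, E₁, hE₁sb, hE₁fr⟩ := hY
  obtain ⟨hBs, hBsSub, hBsRoots, hBsSucc⟩ := hpsb
  obtain ⟨hE₁, hE₁Sub, hE₁Roots, hE₁Succ⟩ := hE₁sb
  obtain ⟨r, hr₁, hrs⟩ := hBsRoots
  obtain ⟨r', hr₁', hrE'⟩ := hE₁Roots
  have hrE : IsRoot E₁ r := (root_uniq hr₁' hr₁) ▸ hrE'
  have hBsSucc' : ∀ ν ∈ Bs, succIn Bs ν ⊆ succIn B₁ ν := by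
    intro ν hν
    by_cases hmax : ν ∈ maxIn B₁
    · intro μ hμ
      exact absurd hμ.2.1 (hmax.2 μ (hBsSub hμ.1))
    · exact (hBsSucc ν ⟨hν, hmax⟩).2
  have hcloBs : ∀ x ζ, x ∈ Bs → ζ ∈ B₁ → ζ ≤ x → ζ ∈ Bs :=
    fun _ _ hx hζ hle => downward_closed h₁ hBs hBsSub hBsSucc' ⟨r, hr₁, hrs⟩ hx hζ hle
  have hcloE₁ : ∀ x ζ, x ∈ E₁ → ζ ∈ B₁ → ζ ≤ x → ζ ∈ E₁ :=
    fun _ _ hx hζ hle => downward_closed h₁ hE₁ hE₁Sub (fun ν hν => (hE₁Succ ν hν).1)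
      ⟨r, hr₁, hrE⟩ hx hζ hle
  have hsuccEs : ∀ ν ∈ E₁ ∩ Bs, succIn (E₁ ∩ Bs) ν = succIn E₁ ν ∩ succIn Bs ν := by
    intro ν hν
    ext μ
    constructor
    · rintro ⟨⟨hμE, hμB⟩, hlt, himm⟩
      have hμB₁ : μ ∈ succIn B₁ ν := by
        refine ⟨hE₁Sub hμE, hlt, ?_⟩
        rintro ⟨σ, hσB₁, h1, h2⟩
        exact himm ⟨σ, ⟨hcloE₁ μ σ hμE hσB₁ h2.le, hcloBs μ σ hμB hσB₁ h2.le⟩, h1, h2⟩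
      refine ⟨⟨hμE, hlt, ?_⟩, ⟨hμB, hlt, ?_⟩⟩
      · rintro ⟨σ, hσ, h1, h2⟩
        exact hμB₁.2.2 ⟨σ, hE₁Sub hσ, h1, h2⟩
      · rintro ⟨σ, hσ, h1, h2⟩
        exact hμB₁.2.2 ⟨σ, hBsSub hσ, h1, h2⟩
    · rintro ⟨hμ1, hμ2⟩
      exact ⟨⟨hμ1.1, hμ2.1⟩, hμ1.2.1, fun ⟨σ, hσ, h1, h2⟩ => hμ1.2.2 ⟨σ, hσ.1, h1, h2⟩⟩
  have hdiff : ∀ ν ∈ E₁ ∩ Bs, (succIn Bs ν \ succIn (E₁ ∩ Bs) ν).Finite := by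
    intro ν hν
    refine ((hE₁Succ ν hν.1).2).subset ?_
    rintro μ ⟨hμs, hμn⟩
    refine ⟨hBsSucc' ν hν.2 hμs, fun hμE => ?_⟩
    exact hμn (by rw [hsuccEs ν hν]; exact ⟨hμE, hμs⟩)
  have hinf : ∀ ν ∈ E₁ ∩ Bs, (∃ μ ∈ B₁, ν < μ) → (succIn (E₁ ∩ Bs) ν).Infinite := by
    intro ν hν hnm
    have hνnm : ν ∉ maxIn B₁ := (not_maxIn_iff (hBsSub hν.2)).mpr hnm
    have h1 : (succIn Bs ν).Infinite := (hBsSucc ν ⟨hν.2, hνnm⟩).1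
    exact infinite_of_diff_finite h1 (hdiff ν hν)
  have hrootEs : IsRoot (E₁ ∩ Bs) r := ⟨⟨hrE.1, hrs.1⟩, fun x hx => hr₁.2 x (hE₁Sub hx.1)⟩
  have hEsCWT : CWT M (E₁ ∩ Bs) := by
    refine ⟨fun x hx => h₁.1 (hE₁Sub hx.1), h₁.2.1.mono (fun x hx => hE₁Sub hx.1),
      ⟨r, hrootEs⟩,
      fun ν hν η hη ρ hρ u v =>
        h₁.2.2.2.1 ν (hE₁Sub hν.1) η (hE₁Sub hη.1) ρ (hE₁Sub hρ.1) u v,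
      fun c hc hch => h₁.2.2.2.2.1 c (fun z hz => hE₁Sub (hc hz).1) hch, ?_,
      fun η hη ν hν u v => h₁.2.2.2.2.2.2.1 η (hE₁Sub hη.1) ν (hE₁Sub hν.1) u v, ?_⟩
    · intro ν hν
      by_cases hnm : ∃ μ ∈ B₁, ν < μ
      · exact Or.inr (hinf ν hν hnm)
      · left
        rw [Set.eq_empty_iff_forall_notMem]
        intro μ hμ
        exact hnm ⟨μ, hE₁Sub hμ.1.1, hμ.2.1⟩
    · intro ν hν F hF
      obtain ⟨hνEs, hνnmax⟩ := hν
      obtain ⟨μ, hμEs, hltμ⟩ := (not_maxIn_iff hνEs).mp hνnmax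
      have hνBsnm : ν ∈ Bs \ maxIn Bs :=
        ⟨hνEs.2, (not_maxIn_iff hνEs.2).mpr ⟨μ, hμEs.2, hltμ⟩⟩
      have hbig := hBs.2.2.2.2.2.2.2 ν hνBsnm F hF
      refine (hbig.diff (hdiff ν hνEs)).mono ?_
      rintro ϱ ⟨⟨hϱs, hϱav⟩, hϱn⟩
      have hϱEs : ϱ ∈ succIn (E₁ ∩ Bs) ν := by
        by_contra hn
        exact hϱn ⟨hϱs, hn⟩
      exact ⟨hϱEs, hϱav⟩
  have hEsSb : sb M Bs (E₁ ∩ Bs) := by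
    refine ⟨hEsCWT, Set.inter_subset_right, ⟨r, hrs, hrootEs⟩, fun ν hν => ⟨?_, hdiff ν hν⟩⟩
    rw [hsuccEs ν hν]
    exact Set.inter_subset_right
  refine ⟨hYM, hYa, E₁ ∩ Bs, hEsSb, Set.inter_subset_right,
    fun η hη ν hν hne => hYa η hη.1 ν hν.1 hne, ?_⟩
  intro τ hτ
  obtain ⟨μ, hμmax, hτμ⟩ := exists_max_ge hEsCWT hτ
  have hμB₁max : μ ∈ maxIn B₁ := by
    refine ⟨hE₁Sub hμmax.1.1, fun ξ hξ hlt => ?_⟩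
    obtain ⟨w, hw⟩ := (hinf μ hμmax.1 ⟨ξ, hξ, hlt⟩).nonempty
    exact hμmax.2 w hw.1 hw.2.1
  obtain ⟨y, hyY, hyc⟩ := hE₁fr.2.2 μ hμmax.1.1
  have hyμ : y ≤ μ := by
    rcases hyc with h | h
    · exact h
    · rcases eq_or_lt_of_le h with heq | hlt
      · exact heq.ge
      · exact absurd hlt (hμB₁max.2 y (hE₁Sub hyY.2))
  have hyBs : y ∈ Bs := hcloBs μ y hμmax.1.2 (hE₁Sub hyY.2) hyμ
  have hcmp := h₁.2.2.2.1 μ (hE₁Sub hμmax.1.1) y (hE₁Sub hyY.2) τ (hE₁Sub hτ.1) hyμ hτμ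
  exact ⟨y, ⟨hyY.1, ⟨hyY.2, hyBs⟩⟩, hcmp⟩

/-- The master front of `B₁` (relative to `B₂`): stop at the first node which is
maximal or outside `B₂`. -/
private def frontSet (B₁ B₂ : Set α) : Set α :=
  {ν ∈ B₁ | (ν ∈ maxIn B₁ ∨ ν ∉ B₂) ∧ ∀ ζ ∈ B₁, ζ < ν → ζ ∈ B₂}

private theorem frontSet_af {B₁ B₂ : Set α} (h₁ : CWT M B₁) :
    IsAlmostFront M B₁ (frontSet B₁ B₂) := by
  have hanti : ∀ η ∈ frontSet B₁ B₂, ∀ ν ∈ frontSet B₁ B₂, η ≠ ν → ¬η ≤ ν := by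
    intro η hη ν hν hne hle
    have hlt : η < ν := lt_of_le_of_ne hle hne
    have hηB₂ : η ∈ B₂ := hν.2.2 η hη.1 hlt
    rcases hη.2.1 with hmax | hout
    · exact hmax.2 ν hν.1 hlt
    · exact hout hηB₂
  refine ⟨fun ν hν => h₁.1 hν.1, hanti, B₁, sb_refl h₁, Set.inter_subset_right,
    fun η hη ν hν hne => hanti η hη.1 ν hν.1 hne, ?_⟩
  intro μ hμ
  obtain ⟨m, hmmax, hμm⟩ := exists_max_ge h₁ hμ
  have hTfin : {ζ ∈ B₁ | ζ ≤ m ∧ (ζ ∈ maxIn B₁ ∨ ζ ∉ B₂)}.Finite :=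
    (below_finite h₁ hmmax.1).subset (fun ζ hζ => ⟨hζ.1, hζ.2.1⟩)
  obtain ⟨z, hz, hzmin⟩ := exists_least_of hTfin ⟨m, hmmax.1, le_rfl, Or.inl hmmax⟩
    (fun a ha b hb => h₁.2.2.2.1 m hmmax.1 a ha.1 b hb.1 ha.2.1 hb.2.1)
  have hzY : z ∈ frontSet B₁ B₂ := by
    refine ⟨hz.1, hz.2.2, fun ζ hζ hlt => ?_⟩
    by_contra hζB₂
    exact hlt.not_ge (hzmin ζ ⟨hζ, hlt.le.trans hz.2.1, Or.inr hζB₂⟩)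
  exact ⟨z, ⟨hzY, hzY.1⟩, h₁.2.2.2.1 m hmmax.1 z hz.1 μ hμ hz.2.1 hμm⟩

/-- The two roots coincide. -/
private theorem roots_eq {B₁ B₂ : Set α} (h₁ : CWT M B₁) (h₂ : CWT M B₂)
    (hRHS : ∀ Y, IsAlmostFront M B₁ Y → IsAlmostFront M B₂ Y) {r₁ r₂ : α}
    (hr₁ : IsRoot B₁ r₁) (hr₂ : IsRoot B₂ r₂) : r₁ = r₂ := by
  have hAF : IsAlmostFront M B₁ {r₁} := by
    refine ⟨fun x hx => h₁.1 (by rw [Set.mem_singleton_iff] at hx; rw [hx]; exact hr₁.1),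
      fun η hη ν hν hne => absurd (hη.trans hν.symm) hne, B₁, sb_refl h₁,
      Set.inter_subset_right, fun η hη ν hν hne => absurd (hη.1.trans hν.1.symm) hne, ?_⟩
    intro ν hν
    exact ⟨r₁, ⟨rfl, hr₁.1⟩, Or.inl (hr₁.2 ν hν)⟩
  obtain ⟨-, -, C₀, hC₀sb, hC₀fr⟩ := hRHS _ hAF
  have hC₀ : CWT M C₀ := hC₀sb.1
  obtain ⟨r', hr₂', hrC₀'⟩ := hC₀sb.2.2.1
  have hrC₀ : IsRoot C₀ r₂ := (root_uniq hr₂' hr₂) ▸ hrC₀'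
  obtain ⟨y, hy, hyc⟩ := hC₀fr.2.2 r₂ hrC₀.1
  have hy1 : y = r₁ := hy.1
  rw [hy1] at hy
  have hr₂r₁ : r₂ ≤ r₁ := hrC₀.2 r₁ hy.2
  by_contra hne
  have hlt : r₂ < r₁ := lt_of_le_of_ne hr₂r₁ (fun h => hne h.symm)
  obtain ⟨w, hw, hwr₁⟩ := exists_succ_le hC₀ hrC₀.1 hy.2 hlt
  have hinf : (succIn C₀ r₂).Infinite := by
    rcases hC₀.2.2.2.2.2.1 r₂ hrC₀.1 with h | h
    · rw [h] at hw
      exact absurd hw (Set.notMem_empty w)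
    · exact h
  have hσle : ∀ σ, σ ∈ succIn C₀ r₂ → σ ≠ r₁ → σ ≤ r₁ := by
    intro σ hσ hσne
    obtain ⟨y', hy', hc⟩ := hC₀fr.2.2 σ hσ.1
    have hy'1 : y' = r₁ := hy'.1
    rw [hy'1] at hy' hc
    rcases hc with h | h
    · rcases eq_or_lt_of_le h with heq | hlt2
      · exact absurd heq.symm hσne
      · exact absurd ⟨r₁, hy'.2, hlt, hlt2⟩ hσ.2.2
    · exact h
  obtain ⟨σ₁, hσ₁⟩ := (hinf.diff (Set.finite_singleton r₁)).nonempty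
  obtain ⟨σ₂, hσ₂⟩ := ((hinf.diff (Set.finite_singleton r₁)).diff
    (Set.finite_singleton σ₁)).nonempty
  have hne12 : σ₁ ≠ σ₂ := fun h => hσ₂.2 (h ▸ rfl)
  exact succ_not_compat hC₀ hσ₁.1 hσ₂.1.1 hne12
    ⟨r₁, h₁.1 hr₁.1, hσle σ₁ hσ₁.1 hσ₁.2, hσle σ₂ hσ₂.1.1 hσ₂.1.2⟩

end MainLemmas


section BackwardSection

variable [PartialOrder α] {M : Set α}

private theorem backward_leStar {B₁ B₂ : Set α} (h₁ : CWT M B₁) (h₂ : CWT M B₂)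
    (hRHS : ∀ Y, IsAlmostFront M B₁ Y → IsAlmostFront M B₂ Y) : leStar M B₁ B₂ := by
  classical
  obtain ⟨r, hr₁⟩ := h₁.2.2.1
  obtain ⟨r₂, hr₂⟩ := h₂.2.2.1
  have hreq : r = r₂ := roots_eq h₁ h₂ hRHS hr₁ hr₂
  subst hreq
  obtain ⟨-, -, C, hCsb, hCfr⟩ := hRHS _ (frontSet_af (B₂ := B₂) h₁)
  have hC : CWT M C := hCsb.1
  have hCB₂ : C ⊆ B₂ := hCsb.2.1
  obtain ⟨r', hr₂', hrC'⟩ := hCsb.2.2.1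
  have hrC : IsRoot C r := (root_uniq hr₂' hr₂) ▸ hrC'
  -- covering of C by the master front
  have hcover : ∀ x ∈ C, ∃ y, y ∈ frontSet B₁ B₂ ∧ y ∈ C ∧ (y ≤ x ∨ x ≤ y) := by
    intro x hx
    obtain ⟨y, hy, hc⟩ := hCfr.2.2 x hx
    exact ⟨y, hy.1, hy.2, hc⟩
  have hY0max : ∀ y, y ∈ frontSet B₁ B₂ → y ∈ B₂ → y ∈ maxIn B₁ := by
    intro y hy hyB₂
    rcases hy.2.1 with h | h
    · exact h
    · exact absurd hyB₂ h
  -- Lemma A: B₁-predecessors of elements of C ∩ B₁ lie in B₂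
  have hlemA : ∀ x, x ∈ C → x ∈ B₁ → ∀ ζ ∈ B₁, ζ ≤ x → ζ ∈ B₂ := by
    intro x hxC hxB₁ ζ hζ hle
    obtain ⟨y, hyY, hyC, hyc⟩ := hcover x hxC
    rcases hyc with hyx | hxy
    · have hymax := hY0max y hyY (hCB₂ hyC)
      have hyeq : y = x := by
        rcases eq_or_lt_of_le hyx with h | h
        · exact h
        · exact absurd h (hymax.2 x hxB₁)
      have hxY : x ∈ frontSet B₁ B₂ := by rw [← hyeq]; exact hyY
      rcases eq_or_lt_of_le hle with h | h
      · rw [h]; exact hCB₂ hxC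
      · exact hxY.2.2 ζ hζ h
    · rcases eq_or_lt_of_le (hle.trans hxy) with h | h
      · have hxζ : x ≤ ζ := by rw [h]; exact hxy
        have : ζ = x := le_antisymm hle hxζ
        rw [this]; exact hCB₂ hxC
      · exact hyY.2.2 ζ hζ h
  -- chain closure into C ∩ B₁
  have hclo : ∀ x, x ∈ C → x ∈ B₁ → ∀ ζ ∈ B₁, ζ ≤ x → ζ ∈ C ∧ ζ ∈ B₁ := by
    intro x hxC hxB₁ ζ hζ hle
    have hζB₂ := hlemA x hxC hxB₁ ζ hζ hle
    exact ⟨downward_closed h₂ hC hCB₂ (fun ν hν => (hCsb.2.2.2 ν hν).1)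
      ⟨r, hr₂, hrC⟩ hxC hζB₂ hle, hζ⟩
  -- non-maximality in C
  have hnmC : ∀ x, x ∈ C → x ∈ B₁ → (∃ μ ∈ B₁, x < μ) → ∃ γ ∈ C, x < γ := by
    rintro x hxC hxB₁ ⟨μ, hμ, hlt⟩
    obtain ⟨y, hyY, hyC, hyc⟩ := hcover x hxC
    rcases hyc with hyx | hxy
    · have hymax := hY0max y hyY (hCB₂ hyC)
      have hyeq : y = x := by
        rcases eq_or_lt_of_le hyx with h | h
        · exact h
        · exact absurd h (hymax.2 x hxB₁)
      rw [hyeq] at hymax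
      exact absurd hlt (hymax.2 μ hμ)
    · rcases eq_or_lt_of_le hxy with h | h
      · have hxY : x ∈ frontSet B₁ B₂ := by rw [h]; exact hyY
        exact absurd hlt ((hY0max x hxY (hCB₂ hxC)).2 μ hμ)
      · exact ⟨y, hyC, h⟩
  -- KEY injection lemma
  have hkey : ∀ x, x ∈ C → x ∈ B₁ → (∃ μ ∈ B₁, x < μ) → ∀ F : Finset α,
      (F : Set α) ⊆ M \ {ρ | ρ ≤ x} →
      {w ∈ succIn B₁ x ∩ C | ∀ ρ ∈ F, ¬Compat M ρ w}.Infinite := by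
    intro x hxC hxB₁ hnm F hF
    obtain ⟨γ₀, hγ₀C, hγ₀lt⟩ := hnmC x hxC hxB₁ hnm
    have hxnmaxC : x ∉ maxIn C := (not_maxIn_iff hxC).mpr ⟨γ₀, hγ₀C, hγ₀lt⟩
    have hS : {γ' ∈ succIn C x | ∀ ρ ∈ F, ¬Compat M ρ γ'}.Infinite :=
      hC.2.2.2.2.2.2.2 x ⟨hxC, hxnmaxC⟩ F hF
    have hmapsto : ∀ γ', γ' ∈ succIn C x → (∀ ρ ∈ F, ¬Compat M ρ γ') →
        ∃ w, (w ∈ succIn B₁ x ∩ C ∧ ∀ ρ ∈ F, ¬Compat M ρ w) ∧ γ' ≤ w := by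
      intro γ' hγ' hav
      obtain ⟨y, hyY, hyC, hyc⟩ := hcover γ' hγ'.1
      have hymax := hY0max y hyY (hCB₂ hyC)
      rcases hyc with hyγ' | hγ'y
      · -- y ≤ γ'
        rcases h₂.2.2.2.1 γ' (hCB₂ hγ'.1) y (hCB₂ hyC) x (hCB₂ hxC) hyγ' hγ'.2.1.le
          with hyx | hxy
        · exfalso
          have hyeqx : y = x := by
            rcases eq_or_lt_of_le hyx with h | h
            · exact h
            · exact absurd h (hymax.2 x hxB₁)
          rw [hyeqx] at hymax
          obtain ⟨μ, hμ, hltμ⟩ := hnm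
          exact hymax.2 μ hμ hltμ
        · have hxlty : x < y := by
            rcases eq_or_lt_of_le hxy with h | h
            · exfalso
              rw [← h] at hymax
              obtain ⟨μ, hμ, hltμ⟩ := hnm
              exact hymax.2 μ hμ hltμ
            · exact h
          have hyeq : y = γ' := by
            rcases eq_or_lt_of_le hyγ' with h | h
            · exact h
            · exact absurd ⟨y, hyC, hxlty, h⟩ hγ'.2.2
          have hγ'Y : γ' ∈ frontSet B₁ B₂ := by rw [← hyeq]; exact hyY
          have hγ'succB₁ : γ' ∈ succIn B₁ x := by
            refine ⟨hγ'Y.1, hγ'.2.1, ?_⟩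
            rintro ⟨ζ, hζB₁, hc1, hc2⟩
            have hζB₂ : ζ ∈ B₂ := hγ'Y.2.2 ζ hζB₁ hc2
            have hζC : ζ ∈ C := downward_closed h₂ hC hCB₂
              (fun ν hν => (hCsb.2.2.2 ν hν).1) ⟨r, hr₂, hrC⟩ hγ'.1 hζB₂ hc2.le
            exact hγ'.2.2 ⟨ζ, hζC, hc1, hc2⟩
          exact ⟨γ', ⟨⟨hγ'succB₁, hγ'.1⟩, hav⟩, le_rfl⟩
      · -- γ' ≤ y
        have hxlty : x < y := lt_of_lt_of_le hγ'.2.1 hγ'y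
        obtain ⟨w, hwsucc, hwy⟩ := exists_succ_le h₁ hxB₁ hyY.1 hxlty
        have hwB₂ : w ∈ B₂ := by
          rcases eq_or_lt_of_le hwy with h | h
          · rw [h]; exact hCB₂ hyC
          · exact hyY.2.2 w hwsucc.1 h
        have hwC : w ∈ C := downward_closed h₂ hC hCB₂
          (fun ν hν => (hCsb.2.2.2 ν hν).1) ⟨r, hr₂, hrC⟩ hyC hwB₂ hwy
        have hγ'w : γ' ≤ w := by
          rcases h₂.2.2.2.1 y (hCB₂ hyC) γ' (hCB₂ hγ'.1) w hwB₂ hγ'y hwy with h | h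
          · exact h
          · rcases eq_or_lt_of_le h with he | hlt
            · exact he.ge
            · exact absurd ⟨w, hwC, hwsucc.2.1, hlt⟩ hγ'.2.2
        exact ⟨w, ⟨⟨hwsucc, hwC⟩,
          fun ρ hρ hcompat => hav ρ hρ (compat_mono hγ'w hcompat)⟩, hγ'w⟩
    by_contra hfin
    rw [Set.not_infinite] at hfin
    have hSsub : {γ' ∈ succIn C x | ∀ ρ ∈ F, ¬Compat M ρ γ'} ⊆
        ⋃ w ∈ {w ∈ succIn B₁ x ∩ C | ∀ ρ ∈ F, ¬Compat M ρ w},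
          {γ' | γ' ∈ succIn C x ∧ γ' ≤ w} := by
      rintro γ' ⟨hγ', hav⟩
      obtain ⟨w, hw, hle⟩ := hmapsto γ' hγ' hav
      exact Set.mem_biUnion hw ⟨hγ', hle⟩
    refine hS (Set.Finite.subset (hfin.biUnion (fun w hw => ?_)) hSsub)
    refine Set.Subsingleton.finite ?_
    rintro a ⟨ha, haw⟩ b ⟨hb, hbw⟩
    by_contra hab
    exact succ_not_compat hC ha hb hab ⟨w, h₂.1 (hCB₂ hw.1.2), haw, hbw⟩
  -- succ computation for C ∩ B₁
  have hsuccBs : ∀ x, x ∈ C → x ∈ B₁ → succIn (C ∩ B₁) x = succIn B₁ x ∩ C := by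
    intro x hxC hxB₁
    ext μ
    constructor
    · rintro ⟨⟨hμC, hμB₁⟩, hlt, himm⟩
      refine ⟨⟨hμB₁, hlt, ?_⟩, hμC⟩
      rintro ⟨ζ, hζB₁, hc1, hc2⟩
      obtain ⟨hζC, -⟩ := hclo μ hμC hμB₁ ζ hζB₁ hc2.le
      exact himm ⟨ζ, ⟨hζC, hζB₁⟩, hc1, hc2⟩
    · rintro ⟨⟨hμB₁, hlt, himm⟩, hμC⟩
      exact ⟨⟨hμC, hμB₁⟩, hlt, fun ⟨ζ, hζ, hc1, hc2⟩ => himm ⟨ζ, hζ.2, hc1, hc2⟩⟩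
  have hrBs : IsRoot (C ∩ B₁) r := ⟨⟨hrC.1, hr₁.1⟩, fun x hx => hr₁.2 x hx.2⟩
  -- CWT of C ∩ B₁
  have hBsCWT : CWT M (C ∩ B₁) := by
    refine ⟨fun x hx => h₁.1 hx.2, h₁.2.1.mono (fun x hx => hx.2), ⟨r, hrBs⟩,
      fun ν hν η hη ρ hρ u v => h₁.2.2.2.1 ν hν.2 η hη.2 ρ hρ.2 u v,
      fun c hc hch => h₁.2.2.2.2.1 c (fun z hz => (hc hz).2) hch, ?_,
      fun η hη ν hν u v => h₁.2.2.2.2.2.2.1 η hη.2 ν hν.2 u v, ?_⟩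
    · intro ν hν
      by_cases hnm : ∃ μ ∈ B₁, ν < μ
      · right
        rw [hsuccBs ν hν.1 hν.2]
        exact (hkey ν hν.1 hν.2 hnm ∅ (by simp)).mono (fun w hw => hw.1)
      · left
        rw [Set.eq_empty_iff_forall_notMem]
        intro μ hμ
        exact hnm ⟨μ, hμ.1.2, hμ.2.1⟩
    · intro ν hν F hF
      obtain ⟨hνBs, hνnm⟩ := hν
      obtain ⟨μ, hμBs, hltμ⟩ := (not_maxIn_iff hνBs).mp hνnm
      have hbig := hkey ν hνBs.1 hνBs.2 ⟨μ, hμBs.2, hltμ⟩ F hF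
      have hrw : succIn (C ∩ B₁) ν = succIn B₁ ν ∩ C := hsuccBs ν hνBs.1 hνBs.2
      refine hbig.mono ?_
      rintro w ⟨hw1, hw2⟩
      rw [hrw] at *
      exact ⟨hw1, hw2⟩
  have hpsbBs : psb M B₁ (C ∩ B₁) := by
    refine ⟨hBsCWT, Set.inter_subset_right, ⟨r, hr₁, hrBs⟩, ?_⟩
    intro ν hν
    obtain ⟨hνBs, hνnm⟩ := hν
    obtain ⟨μ, hμ, hltμ⟩ := (not_maxIn_iff hνBs.2).mp hνnm
    constructor
    · rw [hsuccBs ν hνBs.1 hνBs.2]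
      exact (hkey ν hνBs.1 hνBs.2 ⟨μ, hμ, hltμ⟩ ∅ (by simp)).mono (fun w hw => hw.1)
    · rw [hsuccBs ν hνBs.1 hνBs.2]
      exact Set.inter_subset_left
  -- TRANSFER
  have htrans : ∀ Y, IsAlmostFront M (C ∩ B₁) Y → IsAlmostFront M B₂ Y := by
    intro Y hYaf
    obtain ⟨hYM, hYa, E, hEsb, hEfr⟩ := hYaf
    obtain ⟨hE, hEsub, hERoots, hESucc⟩ := hEsb
    obtain ⟨r'', hr''A, hrE'⟩ := hERoots
    have hrE : IsRoot E r := (root_uniq hr''A hrBs) ▸ hrE'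
    set CE : Set α := {γ ∈ C | (∃ e ∈ E, γ ≤ e) ∨ ∃ y ∈ Y ∩ E, y ≤ γ} with hCEdef
    have hECE : E ⊆ CE := fun e he => ⟨(hEsub he).1, Or.inl ⟨e, he, le_rfl⟩⟩
    have hCEC : CE ⊆ C := fun γ hγ => hγ.1
    have hCEB₂ : CE ⊆ B₂ := fun γ hγ => hCB₂ hγ.1
    have hCEdc : ∀ γ ∈ CE, ∀ β ∈ C, β ≤ γ → β ∈ CE := by
      intro γ hγ β hβ hle
      rcases hγ.2 with ⟨e, he, hγe⟩ | ⟨y, hy, hyγ⟩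
      · exact ⟨hβ, Or.inl ⟨e, he, hle.trans hγe⟩⟩
      · rcases h₂.2.2.2.1 γ (hCB₂ hγ.1) β (hCB₂ hβ) y (hCB₂ (hEsub hy.2).1) hle hyγ
          with hβy | hyβ
        · exact ⟨hβ, Or.inl ⟨y, hy.2, hβy⟩⟩
        · exact ⟨hβ, Or.inr ⟨y, hy, hyβ⟩⟩
    have hEdc : ∀ e ∈ E, ∀ ζ, ζ ∈ C → ζ ∈ B₁ → ζ ≤ e → ζ ∈ E := by
      intro e he ζ hζC hζB₁ hle
      exact downward_closed hBsCWT hE hEsub (fun ν hν => (hESucc ν hν).1)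
        ⟨r, hrBs, hrE⟩ he ⟨hζC, hζB₁⟩ hle
    have hsuccCE : ∀ γ ∈ CE, succIn CE γ = succIn C γ ∩ CE := by
      intro γ hγ
      ext μ
      constructor
      · rintro ⟨hμCE, hlt, himm⟩
        refine ⟨⟨hCEC hμCE, hlt, ?_⟩, hμCE⟩
        rintro ⟨σ, hσC, hc1, hc2⟩
        exact himm ⟨σ, hCEdc μ hμCE σ hσC hc2.le, hc1, hc2⟩
      · rintro ⟨⟨hμC, hlt, himm⟩, hμCE⟩
        exact ⟨hμCE, hlt, fun ⟨σ, hσ, hc1, hc2⟩ => himm ⟨σ, hCEC hσ, hc1, hc2⟩⟩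
    -- finiteness of bad children
    have hbad : ∀ γ ∈ CE, (succIn C γ \ CE).Finite := by
      intro γ hγ
      rcases hγ.2 with ⟨e₀, he₀, hγe₀⟩ | ⟨y, hy, hyγ⟩
      swap
      · refine Set.Finite.subset Set.finite_empty ?_
        rintro μ ⟨hμ, hμn⟩
        exact absurd ⟨hμ.1, Or.inr ⟨y, hy, hyγ.trans hμ.2.1.le⟩⟩ hμn
      · have houter : {x | x ∈ E ∧ x ≤ γ}.Finite :=
          (below_finite h₂ (hCB₂ hγ.1)).subset
            (fun x hx => ⟨hCB₂ (hEsub hx.1).1, hx.2⟩)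
        have hPfin : (⋃ xh ∈ {x | x ∈ E ∧ x ≤ γ},
            (succIn (C ∩ B₁) xh \ succIn E xh)).Finite :=
          houter.biUnion (fun xh hxh => (hESucc xh hxh.1).2)
        have hfib : ∀ vh ∈ (⋃ xh ∈ {x | x ∈ E ∧ x ≤ γ},
            (succIn (C ∩ B₁) xh \ succIn E xh)), {μ | μ ∈ succIn C γ ∧ μ ≤ vh}.Finite := by
          intro vh hvh
          obtain ⟨xh, hxh, hvh'⟩ := Set.mem_iUnion₂.mp hvh
          have hvhM : vh ∈ M := h₂.1 (hCB₂ hvh'.1.1.1)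
          refine Set.Subsingleton.finite ?_
          rintro a ⟨ha, havh⟩ b ⟨hb, hbvh⟩
          by_contra hab
          exact succ_not_compat hC ha hb hab ⟨vh, hvhM, havh, hbvh⟩
        refine Set.Finite.subset (hPfin.biUnion hfib) ?_
        rintro γ' ⟨hγ'succ, hγ'n⟩
        -- main case analysis
        obtain ⟨y', hy'Y0, hy'C, hy'c⟩ := hcover γ' hγ'succ.1
        have hy'max : y' ∈ maxIn B₁ := hY0max y' hy'Y0 (hCB₂ hy'C)
        have hy'B₁ : y' ∈ B₁ := hy'Y0.1
        have hm_nE : y' ∉ E := by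
          intro hy'E
          rcases hy'c with h | h
          · obtain ⟨y, hyYE, hyc2⟩ := hEfr.2.2 y' hy'E
            have hyy' : y ≤ y' := by
              rcases hyc2 with h' | h'
              · exact h'
              · rcases eq_or_lt_of_le h' with he | hlt
                · exact he.ge
                · exact absurd hlt (hy'max.2 y (hEsub hyYE.2).2)
            exact hγ'n ⟨hγ'succ.1, Or.inr ⟨y, hyYE, hyy'.trans h⟩⟩
          · exact hγ'n ⟨hγ'succ.1, Or.inl ⟨y', hy'E, h⟩⟩
        have hTfin : {ζ | ζ ∈ B₁ ∧ ζ ≤ y' ∧ ζ ∉ E}.Finite :=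
          (below_finite h₁ hy'B₁).subset (fun ζ hζ => ⟨hζ.1, hζ.2.1⟩)
        obtain ⟨vh, hvhmem, hvhmin⟩ := exists_least_of hTfin ⟨y', hy'B₁, le_rfl, hm_nE⟩
          (fun a ha b hb => h₁.2.2.2.1 y' hy'B₁ a ha.1 b hb.1 ha.2.1 hb.2.1)
        obtain ⟨hvhB₁, hvhy', hvhnE⟩ := hvhmem
        have hvhCB₁ := hclo y' hy'C hy'B₁ vh hvhB₁ hvhy'
        have hvhC : vh ∈ C := hvhCB₁.1
        have hvhne_r : vh ≠ r := fun h => hvhnE (by rw [h]; exact hrE.1)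
        have hxTfin : {ζ | ζ ∈ B₁ ∧ ζ < vh}.Finite :=
          (below_finite h₁ hvhB₁).subset (fun ζ hζ => ⟨hζ.1, hζ.2.le⟩)
        have hrlt : r < vh := lt_of_le_of_ne (hr₁.2 vh hvhB₁) (Ne.symm hvhne_r)
        obtain ⟨xh, hxhmem, hxhmax⟩ := exists_greatest_of hxTfin ⟨r, hr₁.1, hrlt⟩
          (fun a ha b hb => h₁.2.2.2.1 vh hvhB₁ a ha.1 b hb.1 ha.2.le hb.2.le)
        obtain ⟨hxhB₁, hxhlt⟩ := hxhmem
        have hxhE : xh ∈ E := by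
          by_contra hxhnE
          exact hxhlt.not_ge (hvhmin xh ⟨hxhB₁, hxhlt.le.trans hvhy', hxhnE⟩)
        have hxhC : xh ∈ C := (hEsub hxhE).1
        have hvhsucc : vh ∈ succIn B₁ xh := by
          refine ⟨hvhB₁, hxhlt, ?_⟩
          rintro ⟨ζ, hζ, hc1, hc2⟩
          exact hc1.not_ge (hxhmax ζ ⟨hζ, hc2⟩)
        have hvhsuccBs : vh ∈ succIn (C ∩ B₁) xh := by
          rw [hsuccBs xh hxhC (hEsub hxhE).2]
          exact ⟨hvhsucc, hvhC⟩
        have hvhnsuccE : vh ∉ succIn E xh := fun h => hvhnE h.1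
        -- comparability of vh and γ'
        have hvhγ' : vh ≤ γ' ∨ γ' ≤ vh := by
          rcases hy'c with h | h
          · exact Or.inl (hvhy'.trans h)
          · exact h₂.2.2.2.1 y' (hCB₂ hy'C) vh (hCB₂ hvhC) γ' (hCB₂ hγ'succ.1) hvhy' h
        -- final positional analysis
        have hfinal : xh ≤ γ ∧ γ' ≤ vh := by
          rcases hvhγ' with hle | hle
          · rcases h₂.2.2.2.1 γ' (hCB₂ hγ'succ.1) vh (hCB₂ hvhC) γ (hCB₂ hγ.1) hle
              hγ'succ.2.1.le with h1 | h1
            · exact absurd (hEdc e₀ he₀ vh hvhC hvhB₁ (h1.trans hγe₀)) hvhnE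
            · rcases eq_or_lt_of_le h1 with he | hlt
              · refine absurd (hEdc e₀ he₀ vh hvhC hvhB₁ ?_) hvhnE
                rw [← he]; exact hγe₀
              · have hne : vh = γ' := by
                  rcases eq_or_lt_of_le hle with he | hlt2
                  · exact he
                  · exact absurd ⟨vh, hvhC, hlt, hlt2⟩ hγ'succ.2.2
                have hxhltγ' : xh < γ' := hne ▸ hxhlt
                have hxhγ : xh ≤ γ := by
                  rcases h₂.2.2.2.1 γ' (hCB₂ hγ'succ.1) xh (hCB₂ hxhC) γ (hCB₂ hγ.1)
                    hxhltγ'.le hγ'succ.2.1.le with h2 | h2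
                  · exact h2
                  · rcases eq_or_lt_of_le h2 with he2 | hlt2
                    · exact he2.ge
                    · exact absurd ⟨xh, hxhC, hlt2, hxhltγ'⟩ hγ'succ.2.2
                exact ⟨hxhγ, hne.ge⟩
          · rcases h₂.2.2.2.1 vh (hCB₂ hvhC) xh (hCB₂ hxhC) γ' (hCB₂ hγ'succ.1)
              hxhlt.le hle with h1 | h1
            · rcases h₂.2.2.2.1 γ' (hCB₂ hγ'succ.1) xh (hCB₂ hxhC) γ (hCB₂ hγ.1) h1
                hγ'succ.2.1.le with h2 | h2
              · exact ⟨h2, hle⟩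
              · rcases eq_or_lt_of_le h2 with he2 | hlt2
                · exact ⟨he2.ge, hle⟩
                · rcases eq_or_lt_of_le h1 with he1 | hlt1
                  · exact absurd ⟨hγ'succ.1, Or.inl ⟨xh, hxhE, he1.ge⟩⟩ hγ'n
                  · exact absurd ⟨xh, hxhC, hlt2, hlt1⟩ hγ'succ.2.2
            · exact absurd ⟨hγ'succ.1, Or.inl ⟨xh, hxhE, h1⟩⟩ hγ'n
        have hvhP : vh ∈ ⋃ xh ∈ {x | x ∈ E ∧ x ≤ γ},
            (succIn (C ∩ B₁) xh \ succIn E xh) :=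
          Set.mem_biUnion ⟨hxhE, hfinal.1⟩ ⟨hvhsuccBs, hvhnsuccE⟩
        exact Set.mem_biUnion hvhP ⟨hγ'succ, hfinal.2⟩
    -- CE is an exhaustive subtree of B₂
    have hsuccCEB₂ : ∀ γ ∈ CE, succIn CE γ ⊆ succIn B₂ γ := by
      intro γ hγ μ hμ
      rw [hsuccCE γ hγ] at hμ
      exact (hCsb.2.2.2 γ hγ.1).1 hμ.1
    have hdiffCE : ∀ γ ∈ CE, (succIn B₂ γ \ succIn CE γ).Finite := by
      intro γ hγ
      refine (((hCsb.2.2.2 γ hγ.1).2).union (hbad γ hγ)).subset ?_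
      rintro μ ⟨hμB₂, hμn⟩
      by_cases hμC : μ ∈ succIn C γ
      · right
        refine ⟨hμC, fun hμCE => hμn ?_⟩
        rw [hsuccCE γ hγ]
        exact ⟨hμC, hμCE⟩
      · exact Or.inl ⟨hμB₂, hμC⟩
    have hrCE : IsRoot CE r :=
      ⟨⟨hrC.1, Or.inl ⟨r, hrE.1, le_rfl⟩⟩, fun x hx => hr₂.2 x (hCEB₂ hx)⟩
    have hCECWT : CWT M CE := by
      refine ⟨fun x hx => h₂.1 (hCEB₂ hx), h₂.2.1.mono hCEB₂, ⟨r, hrCE⟩,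
        fun ν hν η hη ρ hρ u v =>
          h₂.2.2.2.1 ν (hCEB₂ hν) η (hCEB₂ hη) ρ (hCEB₂ hρ) u v,
        fun c hc hch => h₂.2.2.2.2.1 c (fun z hz => hCEB₂ (hc hz)) hch, ?_,
        fun η hη ν hν u v => h₂.2.2.2.2.2.2.1 η (hCEB₂ hη) ν (hCEB₂ hν) u v, ?_⟩
      · intro ν hν
        rcases h₂.2.2.2.2.2.1 ν (hCEB₂ hν) with h | h
        · left
          rw [Set.eq_empty_iff_forall_notMem]
          intro μ hμ
          have := hsuccCEB₂ ν hν hμ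
          rw [h] at this
          exact this
        · exact Or.inr (infinite_of_diff_finite h (hdiffCE ν hν))
      · intro ν hν F hF
        obtain ⟨hνCE, hνnm⟩ := hν
        obtain ⟨μ, hμCE, hltμ⟩ := (not_maxIn_iff hνCE).mp hνnm
        have hνnmB₂ : ν ∉ maxIn B₂ := (not_maxIn_iff (hCEB₂ hνCE)).mpr
          ⟨μ, hCEB₂ hμCE, hltμ⟩
        have hbig := h₂.2.2.2.2.2.2.2 ν ⟨hCEB₂ hνCE, hνnmB₂⟩ F hF
        refine (hbig.diff (hdiffCE ν hνCE)).mono ?_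
        rintro ϱ ⟨⟨hϱB₂, hϱav⟩, hϱn⟩
        have : ϱ ∈ succIn CE ν := by
          by_contra hn
          exact hϱn ⟨hϱB₂, hn⟩
        exact ⟨this, hϱav⟩
    have hCEsb : sb M B₂ CE :=
      ⟨hCECWT, hCEB₂, ⟨r, hr₂, hrCE⟩, fun ν hν => ⟨hsuccCEB₂ ν hν, hdiffCE ν hν⟩⟩
    refine ⟨hYM, hYa, CE, hCEsb, fun z hz => hz.2,
      fun η hη ν hν hne => hYa η hη.1 ν hν.1 hne, ?_⟩
    intro τ hτ
    rcases hτ.2 with ⟨e₀, he₀, hτe₀⟩ | ⟨y, hy, hyτ⟩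
    · obtain ⟨y, hy, hyc⟩ := hEfr.2.2 e₀ he₀
      have hyCE : y ∈ CE := hECE hy.2
      rcases hyc with hye₀ | he₀y
      · rcases h₂.2.2.2.1 e₀ (hCB₂ (hEsub he₀).1) y (hCEB₂ hyCE) τ (hCEB₂ hτ) hye₀ hτe₀
          with h | h
        · exact ⟨y, ⟨hy.1, hyCE⟩, Or.inl h⟩
        · exact ⟨y, ⟨hy.1, hyCE⟩, Or.inr h⟩
      · exact ⟨y, ⟨hy.1, hyCE⟩, Or.inr (hτe₀.trans he₀y)⟩
    · exact ⟨y, ⟨hy.1, hECE hy.2⟩, Or.inl hyτ⟩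
  exact ⟨h₁, h₂, ⟨r, hr₁, hr₂⟩, C, hCsb, hpsbBs, htrans⟩

end BackwardSection


/-- `B₁ ≤*_M B₂` iff every almost front of `B₁` is an almost front of `B₂`. -/
theorem leStar_iff_almostFront [PartialOrder α] (M B₁ B₂ : Set α)
    (h₁ : CWT M B₁) (h₂ : CWT M B₂) :
    leStar M B₁ B₂ ↔ ∀ Y, IsAlmostFront M B₁ Y → IsAlmostFront M B₂ Y := by
  constructor
  · rintro ⟨-, -, -, B₂', hsb, hpsb, htr⟩ Y hY
    exact htr Y (almostFront_of_psb h₁ hpsb hY)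
  · intro hRHS
    exact backward_leStar h₁ h₂ hRHS
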